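/- Suppose the linear functional ⟨·⟩ is reflection positive for reflections through edges and the two-point function G_L is torus symmetric. Then for any z ∈ T_L and any i ∈ {1,…,d} such that the coordinate z·e_i is even and nonzero, one has G_L(o, z) ≤ ½ ( G_L(o, (z·e_i − 1)·e_i) + G_L(o, (z·e_i + 1)·e_i) ). -/
import Mathlib


namespace RPPaper

/-- The torus `T_L = (ℤ/Lℤ)^d`. -/
abbrev Torus (d L : ℕ) : Type := Fin d → ZMod L

/-- The unit vector `e i`. -/
def unitVec {d L : ℕ} (i : Fin d) : Torus d L := fun k => if k = i then 1 else 0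

/-- The point `a • e i` on the torus. -/
def axis {d L : ℕ} (i : Fin d) (a : ZMod L) : Torus d L := fun k => if k = i then a else 0

/-- The integer representative of `a : ZMod L` in the interval `(-L/2, L/2]`. -/
def coordRep (L : ℕ) [NeZero L] (a : ZMod L) : ℤ :=
  if (a.val : ℤ) ≤ (L : ℤ) / 2 then (a.val : ℤ) else (a.val : ℤ) - (L : ℤ)

/-- The reflection of the torus in the hyperplane `{z : z·e i = t/2}` (here `t = 2m`);
it is a reflection through edges if `t` is odd, and through vertices if `t` is even. -/
def reflect {d L : ℕ} (i : Fin d) (t : ℕ) (x : Torus d L) : Torus d L :=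
  Function.update x i ((t : ZMod L) - x i)

/-- The positive half `T_L^+` of the torus associated to the reflection in the hyperplane
`{z : z·e i = t/2}`. -/
def posHalf (d L : ℕ) [NeZero L] (i : Fin d) (t : ℕ) : Finset (Torus d L) :=
  if t % 2 = 1 then Finset.univ.filter (fun x => (x i - (((t + 1) / 2 : ℕ) : ZMod L)).val < L / 2)
  else Finset.univ.filter (fun x => (x i - ((t / 2 : ℕ) : ZMod L)).val ≤ L / 2)

/-- The negative half `T_L^- = θ(T_L^+)`. -/
def negHalf (d L : ℕ) [NeZero L] (i : Fin d) (t : ℕ) : Finset (Torus d L) :=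
  (posHalf d L i t).image (reflect i t)

/-- The state space `S = ∏_{x ∈ T_L} Σ_x` (all local state spaces equal to `Sig`). -/
abbrev MState (d L : ℕ) (Sig : Type*) : Type _ := Torus d L → Sig

/-- `A : S → ℝ` has domain `D` if it depends only on the local states in `D`. -/
def HasDomain {d L : ℕ} {Sig : Type*} (A : MState d L Sig → ℝ) (D : Set (Torus d L)) : Prop :=
  ∀ w₁ w₂ : MState d L Sig, (∀ x ∈ D, w₁ x = w₂ x) → A w₁ = A w₂

/-- The action `θA (w) = A (θ w)`, where `(θ w) x = w (θ x)`, of the reflection on functions. -/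
def reflectFun {d L : ℕ} {Sig : Type*} (i : Fin d) (t : ℕ) (A : MState d L Sig → ℝ) :
    MState d L Sig → ℝ := fun w => A (fun x => w (reflect i t x))

/-- `⟨·⟩` is reflection positive with respect to the reflection in the hyperplane
`{z : z·e i = t/2}`: for all `A, B ∈ A_L^+` (members of the algebra with domain `T_L^+`),
`⟨A·θB⟩ = ⟨B·θA⟩` and `⟨A·θA⟩ ≥ 0`. -/
def IsRP {d L : ℕ} {Sig : Type*} [NeZero L] (AL : Subalgebra ℝ (MState d L Sig → ℝ))
    (phi : (MState d L Sig → ℝ) →ₗ[ℝ] ℝ) (i : Fin d) (t : ℕ) : Prop :=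
  ∀ A B : MState d L Sig → ℝ, A ∈ AL → B ∈ AL →
    HasDomain A ↑(posHalf d L i t) → HasDomain B ↑(posHalf d L i t) →
    phi (A * reflectFun i t B) = phi (B * reflectFun i t A) ∧ 0 ≤ phi (A * reflectFun i t A)

/-- Reflection positivity for all reflections through edges. -/
def RPEdges {d L : ℕ} {Sig : Type*} [NeZero L] (AL : Subalgebra ℝ (MState d L Sig → ℝ))
    (phi : (MState d L Sig → ℝ) →ₗ[ℝ] ℝ) : Prop :=
  ∀ (i : Fin d) (t : ℕ), t < 2 * L → t % 2 = 1 → IsRP AL phi i t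

/-- Reflection positivity for all reflections through vertices. -/
def RPVertices {d L : ℕ} {Sig : Type*} [NeZero L] (AL : Subalgebra ℝ (MState d L Sig → ℝ))
    (phi : (MState d L Sig → ℝ) →ₗ[ℝ] ℝ) : Prop :=
  ∀ (i : Fin d) (t : ℕ), t < 2 * L → t % 2 = 0 → IsRP AL phi i t

/-- The single-site function `F^j_x`, obtained from a function `f : Sig → ℝ` of the local
state at the origin by the (path-independent) sequence of reflections sending `o` to `x`. -/
def site {d L : ℕ} {Sig : Type*} (f : Sig → ℝ) (x : Torus d L) : MState d L Sig → ℝ :=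
  fun w => f (w x)

/-- The two-point function `G_L(x,y) = ⟨F²_x F²_y ∏_{z ≠ x,y} F¹_z⟩`. -/
noncomputable def twoPoint {d L : ℕ} {Sig : Type*} [NeZero L]
    (phi : (MState d L Sig → ℝ) →ₗ[ℝ] ℝ) (f1 f2 : Sig → ℝ) (x y : Torus d L) : ℝ :=
  phi (fun w => f2 (w x) * f2 (w y) * ∏ z ∈ (Finset.univ.erase x).erase y, f1 (w z))

/-- Torus symmetry: `⟨∏_{x∈A}F¹_x ∏_{x∈B}F²_x⟩ = ⟨∏_{x∈A+z}F¹_x ∏_{x∈B+z}F²_x⟩`. -/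
def TorusSymmetric {d L : ℕ} {Sig : Type*} [NeZero L]
    (phi : (MState d L Sig → ℝ) →ₗ[ℝ] ℝ) (f1 f2 : Sig → ℝ) : Prop :=
  ∀ (A B : Finset (Torus d L)) (z : Torus d L),
    phi (fun w => (∏ x ∈ A, f1 (w x)) * ∏ x ∈ B, f2 (w x)) =
      phi (fun w => (∏ x ∈ A, f1 (w (x + z))) * ∏ x ∈ B, f2 (w (x + z)))


-- ##### auxiliary lemmas #####

section Aux

variable {d L : ℕ} [NeZero L] {Sig : Type*}

lemma reflect_apply (i : Fin d) (t : ℕ) (x : Torus d L) :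
    reflect i t x i = (t : ZMod L) - x i := Function.update_self i _ x

lemma reflect_apply_ne (i : Fin d) (t : ℕ) (x : Torus d L) {k : Fin d} (hk : k ≠ i) :
    reflect i t x k = x k := Function.update_of_ne hk _ x

lemma reflect_reflect (i : Fin d) (t : ℕ) (x : Torus d L) :
    reflect i t (reflect i t x) = x := by
  funext k
  by_cases hk : k = i
  · subst hk
    rw [reflect_apply, reflect_apply, sub_sub_cancel]
  · rw [reflect_apply_ne _ _ _ hk, reflect_apply_ne _ _ _ hk]

lemma reflect_injective (i : Fin d) (t : ℕ) :
    Function.Injective (reflect i t : Torus d L → Torus d L) :=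
  Function.LeftInverse.injective (reflect_reflect i t)

lemma mem_posHalf_iff {i : Fin d} {t : ℕ} (ht : t % 2 = 1) (x : Torus d L) :
    x ∈ posHalf d L i t ↔ (x i - (((t + 1) / 2 : ℕ) : ZMod L)).val < L / 2 := by
  rw [posHalf, if_pos ht, Finset.mem_filter]
  simp

lemma val_neg_succ (y : ZMod L) : (-(y + 1)).val = L - 1 - y.val := by
  have hy : y + 1 = ((y.val + 1 : ℕ) : ZMod L) := by
    rw [Nat.cast_add, ZMod.natCast_rightInverse y, Nat.cast_one]
  have hv : y.val < L := ZMod.val_lt y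
  have hsum : (y + 1) + ((L - 1 - y.val : ℕ) : ZMod L) = 0 := by
    rw [hy, ← Nat.cast_add]
    have : y.val + 1 + (L - 1 - y.val) = L := by omega
    rw [this, ZMod.natCast_self]
  rw [neg_eq_of_add_eq_zero_right hsum]
  exact ZMod.val_cast_of_lt (by have := NeZero.pos L; omega)

/-- For an odd `t` and even `L`, the reflection maps `posHalf` onto its complement. -/
lemma reflect_mem_posHalf (hL : Even L) {i : Fin d} {t : ℕ} (ht : t % 2 = 1) (x : Torus d L) :
    reflect i t x ∈ posHalf d L i t ↔ x ∉ posHalf d L i t := by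
  rw [mem_posHalf_iff ht, mem_posHalf_iff ht, reflect_apply]
  set c : ZMod L := (((t + 1) / 2 : ℕ) : ZMod L) with hc
  have htc : (t : ZMod L) - c = c - 1 := by
    have hnat : t + 1 = (t + 1) / 2 + (t + 1) / 2 := by omega
    have : (t : ZMod L) + 1 = c + c := by
      rw [hc, ← Nat.cast_add, ← hnat]
      push_cast
      ring
    linear_combination this
  have h2 : (t : ZMod L) - x i - c = -((x i - c) + 1) := by linear_combination htc
  rw [h2, val_neg_succ]
  have hv : (x i - c).val < L := ZMod.val_lt _
  obtain ⟨n, hn⟩ := hL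
  omega

lemma image_reflect_posHalf (hL : Even L) {i : Fin d} {t : ℕ} (ht : t % 2 = 1) :
    (posHalf d L i t).image (reflect i t) = Finset.univ \ posHalf d L i t := by
  ext y
  simp only [Finset.mem_image, Finset.mem_sdiff, Finset.mem_univ, true_and]
  constructor
  · rintro ⟨x, hx, rfl⟩
    have h := reflect_mem_posHalf hL (i := i) ht (reflect i t x)
    rw [reflect_reflect] at h
    exact h.mp hx
  · intro hy
    exact ⟨reflect i t y, (reflect_mem_posHalf hL ht y).mpr hy, reflect_reflect i t y⟩

end Aux

section Main

variable {d L : ℕ} [NeZero L] {Sig : Type*}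

/-- The function `F²_u ∏_{x ∈ P \ {u}} F¹_x`. -/
def Ffun (f1 f2 : Sig → ℝ) (P : Finset (Torus d L)) (u : Torus d L) : MState d L Sig → ℝ :=
  fun w => f2 (w u) * ∏ x ∈ P.erase u, f1 (w x)

lemma Ffun_mem (AL : Subalgebra ℝ (MState d L Sig → ℝ)) (f1 f2 : Sig → ℝ)
    (hF1 : ∀ x : Torus d L, site f1 x ∈ AL) (hF2 : ∀ x : Torus d L, site f2 x ∈ AL)
    (P : Finset (Torus d L)) (u : Torus d L) : Ffun f1 f2 P u ∈ AL := by
  have he : Ffun f1 f2 P u = site f2 u * ∏ x ∈ P.erase u, site f1 x := by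
    funext w
    simp only [Ffun, site, Pi.mul_apply]
    congr 1
    exact (Finset.prod_apply w (P.erase u) (fun x => site f1 x)).symm
  rw [he]
  exact mul_mem (hF2 u) (prod_mem fun x _ => hF1 x)

lemma Ffun_domain (f1 f2 : Sig → ℝ) (P : Finset (Torus d L)) (u : Torus d L) (hu : u ∈ P) :
    HasDomain (Ffun f1 f2 P u) ↑P := by
  intro w1 w2 h
  simp only [Ffun]
  rw [h u hu]
  congr 1
  exact Finset.prod_congr rfl fun x hx => by rw [h x (Finset.mem_of_mem_erase hx)]

lemma HasDomain.sub {A B : MState d L Sig → ℝ} {D : Set (Torus d L)}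
    (hA : HasDomain A D) (hB : HasDomain B D) : HasDomain (A - B) D := by
  intro w1 w2 h
  simp only [Pi.sub_apply, hA w1 w2 h, hB w1 w2 h]

/-- The key product identity `F_u · θ F_v = F²_u F²_{θv} ∏_{x ≠ u, θv} F¹_x`. -/
lemma Ffun_mul_reflect (hL : Even L) {i : Fin d} {t : ℕ} (ht : t % 2 = 1)
    (f1 f2 : Sig → ℝ) {u v : Torus d L}
    (hu : u ∈ posHalf d L i t) (hv : v ∈ posHalf d L i t) :
    Ffun f1 f2 (posHalf d L i t) u * reflectFun i t (Ffun f1 f2 (posHalf d L i t) v) =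
      fun w => f2 (w u) * f2 (w (reflect i t v)) *
        ∏ x ∈ (Finset.univ.erase u).erase (reflect i t v), f1 (w x) := by
  set P := posHalf d L i t with hP
  have hθv : reflect i t v ∉ P := by
    have h := (reflect_mem_posHalf hL (i := i) ht v).mpr
    by_contra hcon
    exact absurd hv ((reflect_mem_posHalf hL (i := i) ht v).mp hcon)
  funext w
  simp only [Pi.mul_apply, Ffun, reflectFun]
  have himg2 : (P.erase v).image (reflect i t) = (Finset.univ \ P).erase (reflect i t v) := by
    rw [Finset.image_erase (reflect_injective i t), hP, image_reflect_posHalf hL ht]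
  have h1 : (∏ x ∈ P.erase v, f1 (w (reflect i t x))) =
      ∏ x ∈ (Finset.univ \ P).erase (reflect i t v), f1 (w x) := by
    rw [← himg2, Finset.prod_image (fun x _ y _ h => reflect_injective i t h)]
  rw [h1]
  have hdisj : Disjoint (P.erase u) ((Finset.univ \ P).erase (reflect i t v)) :=
    Finset.disjoint_left.mpr fun x hx hx' => by
      have h1 := Finset.mem_of_mem_erase hx
      have h2 := Finset.mem_of_mem_erase hx'
      exact (Finset.mem_sdiff.mp h2).2 h1
  have hunion : (P.erase u) ∪ ((Finset.univ \ P).erase (reflect i t v)) =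
      (Finset.univ.erase u).erase (reflect i t v) := by
    ext x
    simp only [Finset.mem_union, Finset.mem_erase, Finset.mem_sdiff, Finset.mem_univ, true_and,
      and_true]
    constructor
    · rintro (⟨hxu, hxP⟩ | ⟨hxv, hxP⟩)
      · exact ⟨fun h => hθv (h ▸ hxP), hxu⟩
      · exact ⟨hxv, fun h => hxP (h ▸ hu)⟩
    · rintro ⟨hxv, hxu⟩
      by_cases hxP : x ∈ P
      · exact Or.inl ⟨hxu, hxP⟩
      · exact Or.inr ⟨hxv, hxP⟩
  rw [← hunion, Finset.prod_union hdisj]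
  ring

/-- Cauchy–Schwarz consequence of reflection positivity. -/
lemma rp_cauchy_schwarz {AL : Subalgebra ℝ (MState d L Sig → ℝ)}
    {phi : (MState d L Sig → ℝ) →ₗ[ℝ] ℝ} {i : Fin d} {t : ℕ}
    (hRP : IsRP AL phi i t) {A B : MState d L Sig → ℝ}
    (hA : A ∈ AL) (hB : B ∈ AL)
    (hdA : HasDomain A ↑(posHalf d L i t)) (hdB : HasDomain B ↑(posHalf d L i t)) :
    phi (A * reflectFun i t B) ≤
      (phi (A * reflectFun i t A) + phi (B * reflectFun i t B)) / 2 := by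
  obtain ⟨hsymm, -⟩ := hRP A B hA hB hdA hdB
  obtain ⟨-, hpos⟩ := hRP (A - B) (A - B) (sub_mem hA hB) (sub_mem hA hB)
    (hdA.sub hdB) (hdA.sub hdB)
  have hre : reflectFun i t (A - B) = reflectFun i t A - reflectFun i t B := rfl
  have hexp : (A - B) * reflectFun i t (A - B) =
      A * reflectFun i t A - A * reflectFun i t B - B * reflectFun i t A
        + B * reflectFun i t B := by
    rw [hre]; ring
  rw [hexp, map_add, map_sub, map_sub, hsymm] at hpos
  linarith

/-- Translation invariance of the two-point function. -/
lemma twoPoint_translate {phi : (MState d L Sig → ℝ) →ₗ[ℝ] ℝ} {f1 f2 : Sig → ℝ}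
    (hsym : TorusSymmetric phi f1 f2) {x y : Torus d L} (hxy : x ≠ y) (v : Torus d L) :
    twoPoint phi f1 f2 x y = twoPoint phi f1 f2 (x + v) (y + v) := by
  have hinj : Function.Injective (fun a : Torus d L => a + v) :=
    fun a b h => by simpa using congrArg (fun c => c - v) h
  have h := hsym ((Finset.univ.erase x).erase y) {x, y} v
  have e1 : (fun w : MState d L Sig =>
      (∏ p ∈ (Finset.univ.erase x).erase y, f1 (w p)) * ∏ p ∈ ({x, y} : Finset _), f2 (w p)) =
      fun w => f2 (w x) * f2 (w y) * ∏ p ∈ (Finset.univ.erase x).erase y, f1 (w p) := by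
    funext w
    rw [Finset.prod_pair hxy]
    ring
  have himg : ((Finset.univ.erase x).erase y).image (fun a => a + v) =
      (Finset.univ.erase (x + v)).erase (y + v) := by
    rw [Finset.image_erase hinj, Finset.image_erase hinj]
    congr 2
    ext a
    simp only [Finset.mem_image, Finset.mem_univ, true_and, iff_true]
    exact ⟨a - v, by simp⟩
  have e2 : (fun w : MState d L Sig =>
      (∏ p ∈ (Finset.univ.erase x).erase y, f1 (w (p + v))) *
        ∏ p ∈ ({x, y} : Finset _), f2 (w (p + v))) =
      fun w => f2 (w (x + v)) * f2 (w (y + v)) *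
        ∏ p ∈ (Finset.univ.erase (x + v)).erase (y + v), f1 (w p) := by
    funext w
    rw [Finset.prod_pair hxy, ← himg,
      Finset.prod_image (fun a _ b _ hab => hinj hab)]
    ring
  rw [e1, e2] at h
  exact h

lemma natCast_add_eq_zero {L : ℕ} [NeZero L] {a c : ℕ} (h : a + c = 2 * L) :
    (a : ZMod L) = -(c : ZMod L) := by
  have h0 : ((a + c : ℕ) : ZMod L) = 0 := by
    rw [h]
    push_cast [ZMod.natCast_self]
    ring
  push_cast at h0
  linear_combination h0

lemma neg_natCast_eq {L : ℕ} [NeZero L] {a b : ℕ} (h : a + b = L) :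
    -(a : ZMod L) = (b : ZMod L) := by
  apply neg_eq_of_add_eq_zero_right
  rw [← Nat.cast_add, h, ZMod.natCast_self]

/-- Existence of a suitable odd reflection parameter `t`. -/
lemma exists_good_t {L : ℕ} [NeZero L] (hL : Even L) (u : ZMod L)
    (heven : Even (coordRep L u)) (hne : coordRep L u ≠ 0) :
    ∃ t : ℕ, t % 2 = 1 ∧ t < 2 * L ∧ ((t : ℕ) : ZMod L) = u - 1 ∧
      ((0 : ZMod L) - (((t + 1) / 2 : ℕ) : ZMod L)).val < L / 2 ∧
      ((-1 : ZMod L) - (((t + 1) / 2 : ℕ) : ZMod L)).val < L / 2 := by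
  obtain ⟨n, hn⟩ := hL
  have hval : u.val < L := ZMod.val_lt u
  have hvu : ((u.val : ℕ) : ZMod L) = u := ZMod.natCast_rightInverse u
  have hL2 : L / 2 = n := by omega
  have hdiv : (L : ℤ) / 2 = n := by
    have : (L : ℤ) = 2 * n := by exact_mod_cast (by omega : L = 2 * n)
    omega
  rw [coordRep, hdiv] at heven hne
  by_cases hc : (u.val : ℤ) ≤ (n : ℤ)
  · -- positive case : a = u.val, 0 < u.val ≤ n
    rw [if_pos hc] at heven hne
    have hbeven : Even u.val := by exact_mod_cast heven
    obtain ⟨m, hm⟩ := hbeven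
    have hb0 : u.val ≠ 0 := by exact_mod_cast hne
    have hbn : u.val ≤ n := by exact_mod_cast hc
    have hm1 : 1 ≤ m := by omega
    have hmn : m + 1 ≤ n := by omega
    refine ⟨2 * n + 2 * m - 1, by omega, by omega, ?_, ?_, ?_⟩
    · have ht' : 2 * n + 2 * m - 1 = L + (u.val - 1) := by omega
      rw [ht', Nat.cast_add, ZMod.natCast_self, zero_add,
        Nat.cast_sub (by omega : 1 ≤ u.val), hvu, Nat.cast_one]
    · have hq : (2 * n + 2 * m - 1 + 1) / 2 = n + m := by omega
      rw [hq, zero_sub, neg_natCast_eq (by omega : (n + m) + (n - m) = L),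
        ZMod.val_cast_of_lt (by omega : n - m < L)]
      omega
    · have hq : (2 * n + 2 * m - 1 + 1) / 2 = n + m := by omega
      have h1 : (-1 : ZMod L) - ((n + m : ℕ) : ZMod L) = -(((n + m + 1 : ℕ)) : ZMod L) := by
        push_cast
        ring
      rw [hq, h1, neg_natCast_eq (by omega : (n + m + 1) + (n - m - 1) = L),
        ZMod.val_cast_of_lt (by omega : n - m - 1 < L)]
      omega
  · -- negative case : a = u.val - L, n < u.val < L
    rw [if_neg hc] at heven hne
    have hcn : (n : ℤ) < u.val := lt_of_not_ge hc
    have hvn : n < u.val := by exact_mod_cast hcn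
    set b : ℕ := L - u.val with hbdef
    have hub : u.val = L - b := by omega
    have hbeven : Even b := by
      have : (u.val : ℤ) - L = -(b : ℤ) := by omega
      rw [this] at heven
      have hb2 : Even (b : ℤ) := by simpa using heven.neg
      exact_mod_cast hb2
    obtain ⟨m, hm⟩ := hbeven
    have hm1 : 1 ≤ m := by omega
    have hmn : 2 * m ≤ n - 1 := by omega
    have hu' : u = -((b : ℕ) : ZMod L) := by
      rw [← hvu, hub]
      exact (neg_natCast_eq (by omega : b + (L - b) = L)).symm
    refine ⟨4 * n - 2 * m - 1, by omega, by omega, ?_, ?_, ?_⟩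
    · have h2 : ((4 * n - 2 * m - 1 : ℕ) : ZMod L) = -(((b + 1 : ℕ)) : ZMod L) :=
        natCast_add_eq_zero (by omega : (4 * n - 2 * m - 1) + (b + 1) = 2 * L)
      rw [h2, hu']
      push_cast
      ring
    · have hq : (4 * n - 2 * m - 1 + 1) / 2 = 2 * n - m := by omega
      rw [hq, zero_sub, neg_natCast_eq (by omega : (2 * n - m) + m = L),
        ZMod.val_cast_of_lt (by omega : m < L)]
      omega
    · have hq : (4 * n - 2 * m - 1 + 1) / 2 = 2 * n - m := by omega
      have h1 : (-1 : ZMod L) - ((2 * n - m : ℕ) : ZMod L) =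
          -(((2 * n - m + 1 : ℕ)) : ZMod L) := by
        push_cast
        ring
      rw [hq, h1, neg_natCast_eq (by omega : (2 * n - m + 1) + (m - 1) = L),
        ZMod.val_cast_of_lt (by omega : m - 1 < L)]
      omega

end Main

theorem statement1' {d L : ℕ} [NeZero L] (hd : 2 ≤ d) (hL : Even L) {Sig : Type*}
    (AL : Subalgebra ℝ (MState d L Sig → ℝ)) (hfin : FiniteDimensional ℝ AL)
    (phi : (MState d L Sig → ℝ) →ₗ[ℝ] ℝ) (hone : phi 1 = 1)
    (f1 f2 : Sig → ℝ)
    (hF1 : ∀ x : Torus d L, site f1 x ∈ AL) (hF2 : ∀ x : Torus d L, site f2 x ∈ AL)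
    (hRP : ∀ (i : Fin d) (t : ℕ), t < 2 * L → t % 2 = 1 → IsRP AL phi i t)
    (hsym : TorusSymmetric phi f1 f2)
    (z : Torus d L) (i : Fin d) (heven : Even (coordRep L (z i))) (hne : coordRep L (z i) ≠ 0) :
    twoPoint phi f1 f2 0 z ≤
      (twoPoint phi f1 f2 0 (axis i (z i - 1)) + twoPoint phi f1 f2 0 (axis i (z i + 1))) / 2 := by
  obtain ⟨t, ht1, ht2, htz, hc0, hc1⟩ := exists_good_t hL (z i) heven hne
  set P := posHalf d L i t with hPdef
  have hRPt := hRP i t ht2 ht1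
  -- memberships
  have h0P : (0 : Torus d L) ∈ P := by
    rw [hPdef, mem_posHalf_iff ht1]
    simpa using hc0
  set z' := reflect i t z with hz'def
  have hzz : reflect i t z' = z := reflect_reflect i t z
  have hz'i : z' i = -1 := by
    rw [hz'def, reflect_apply, htz]
    ring
  have hz'P : z' ∈ P := by
    rw [hPdef, mem_posHalf_iff ht1, hz'i]
    exact hc1
  have hzP : z ∉ P := by
    rw [hPdef]
    exact (reflect_mem_posHalf hL (i := i) ht1 z).mp hz'P
  have hz'z : z' ≠ z := fun h => hzP (h ▸ hz'P)
  -- the two half-space observables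
  set A := Ffun f1 f2 P (0 : Torus d L) with hA
  set B := Ffun f1 f2 P z' with hB
  have hkey : twoPoint phi f1 f2 0 z = phi (A * reflectFun i t B) := by
    rw [hA, hB, hPdef, Ffun_mul_reflect hL ht1 f1 f2 h0P hz'P]
    simp only [hzz]
    rfl
  have hAA : phi (A * reflectFun i t A) = twoPoint phi f1 f2 0 (reflect i t 0) := by
    rw [hA, hPdef, Ffun_mul_reflect hL ht1 f1 f2 h0P h0P]
    rfl
  have hBB : phi (B * reflectFun i t B) = twoPoint phi f1 f2 z' z := by
    rw [hB, hPdef, Ffun_mul_reflect hL ht1 f1 f2 hz'P hz'P]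
    simp only [hzz]
    rfl
  have hCS : phi (A * reflectFun i t B) ≤
      (phi (A * reflectFun i t A) + phi (B * reflectFun i t B)) / 2 :=
    rp_cauchy_schwarz hRPt (Ffun_mem AL f1 f2 hF1 hF2 P _) (Ffun_mem AL f1 f2 hF1 hF2 P _)
      (Ffun_domain f1 f2 P _ h0P) (Ffun_domain f1 f2 P _ hz'P)
  -- identify the boundary terms
  have hrefl0 : reflect i t (0 : Torus d L) = axis i (z i - 1) := by
    funext k
    by_cases hk : k = i
    · subst hk
      rw [reflect_apply, axis, if_pos rfl, htz]
      simp
    · rw [reflect_apply_ne _ _ _ hk, axis, if_neg hk]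
      rfl
  have htrans : twoPoint phi f1 f2 z' z = twoPoint phi f1 f2 0 (axis i (z i + 1)) := by
    have h := twoPoint_translate hsym hz'z (-z')
    rw [add_neg_cancel] at h
    have hzz' : z + -z' = axis i (z i + 1) := by
      funext k
      by_cases hk : k = i
      · subst hk
        rw [Pi.add_apply, Pi.neg_apply, hz'i, axis, if_pos rfl]
        ring
      · simp only [Pi.add_apply, Pi.neg_apply, axis, if_neg hk, hz'def,
          reflect_apply_ne _ _ _ hk]
        ring
    rw [hzz'] at h
    exact h
  rw [hkey, ← hrefl0, ← htrans]
  rw [hAA, hBB] at hCS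
  exact hCS


/-- If `⟨·⟩` is reflection positive for reflections through edges and the two-point function
is torus symmetric, then for `z·e i` even and nonzero,
`G_L(o, z) ≤ ½(G_L(o, (z·e i − 1) e i) + G_L(o, (z·e i + 1) e i))`. -/
theorem statement1 {d L : ℕ} [NeZero L] (hd : 2 ≤ d) (hL : Even L) {Sig : Type*}
    (AL : Subalgebra ℝ (MState d L Sig → ℝ)) (hfin : FiniteDimensional ℝ AL)
    (phi : (MState d L Sig → ℝ) →ₗ[ℝ] ℝ) (hone : phi 1 = 1)
    (f1 f2 : Sig → ℝ)
    (hF1 : ∀ x : Torus d L, site f1 x ∈ AL) (hF2 : ∀ x : Torus d L, site f2 x ∈ AL)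
    (hRP : RPEdges AL phi) (hsym : TorusSymmetric phi f1 f2)
    (z : Torus d L) (i : Fin d) (heven : Even (coordRep L (z i))) (hne : coordRep L (z i) ≠ 0) :
    twoPoint phi f1 f2 0 z ≤
      (twoPoint phi f1 f2 0 (axis i (z i - 1)) + twoPoint phi f1 f2 0 (axis i (z i + 1))) / 2 :=
  statement1' hd hL AL hfin phi hone f1 f2 hF1 hF2 hRP hsym z i heven hne

end RPPaper
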